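/- Let m ≤ n/100, let G be an n-vertex graph with minimum degree at least n − m, and let T be an n-vertex tree containing at least 10m pairwise vertex-disjoint bare paths of length 4. Then G contains a copy of T (as a spanning subgraph). -/

import Mathlib

open SimpleGraph Finset

section aux
variable {α : Type*} [Fintype α] [DecidableEq α] {H : SimpleGraph α} [DecidableRel H.Adj]

/-- A walk of length 4 has explicit support given by its `getVert`s. -/
lemma walk_len4_support {β : Type*} {K : SimpleGraph β} {u v : β} (w : K.Walk u v)
    (h4 : w.length = 4) :
    w.support = [w.getVert 0, w.getVert 1, w.getVert 2, w.getVert 3, w.getVert 4] := by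
  cases w with
  | nil => simp at h4
  | cons h1 w1 =>
  cases w1 with
  | nil => simp at h4
  | cons h2 w2 =>
  cases w2 with
  | nil => simp at h4
  | cons h3 w3 =>
  cases w3 with
  | nil => simp at h4
  | cons h4' w4 =>
  cases w4 with
  | nil => simp [SimpleGraph.Walk.support_cons, SimpleGraph.Walk.getVert]
  | cons h5 w5 => simp [SimpleGraph.Walk.length_cons] at h4

lemma getVert_mem_support' {β : Type*} {K : SimpleGraph β} {u v : β} (w : K.Walk u v) (k : ℕ) :
    w.getVert k ∈ w.support := by
  rcases le_or_gt k w.length with h | h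
  · exact Walk.mem_support_iff_exists_getVert.mpr ⟨k, rfl, h⟩
  · rw [Walk.getVert_of_length_le w (le_of_lt h)]
    exact w.end_mem_support

/-- In an acyclic graph, any nonempty finite set contains a vertex with at most one
neighbour inside the set. -/
lemma exists_degle_one (hac : H.IsAcyclic) (S : Finset α) (hS : S.Nonempty) :
    ∃ a ∈ S, ((S.erase a).filter (fun b => H.Adj a b)).card ≤ 1 := by
  classical
  set Q : ℕ → Prop := fun l => ∃ (u w : α) (p : H.Walk u w), p.IsPath ∧
    (∀ x ∈ p.support, x ∈ S) ∧ p.length = l with hQ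
  obtain ⟨a, ha⟩ := hS
  have hQ0 : Q 0 := ⟨a, a, Walk.nil, by simp, by simpa using ha, rfl⟩
  have hbd : ∀ l, Q l → l < Fintype.card α := by
    rintro l ⟨u, w, p, hp, _, rfl⟩
    have := hp.support_nodup
    have hlen : p.support.length = p.length + 1 := p.length_support
    have := List.Nodup.length_le_card this
    omega
  have hcard0 : 0 < Fintype.card α := Fintype.card_pos_iff.mpr ⟨a⟩
  set k := Nat.findGreatest Q (Fintype.card α) with hk
  have hQk : Q k := Nat.findGreatest_spec (Nat.zero_le _) hQ0
  obtain ⟨u, w, p, hp, hsub, hlen⟩ := hQk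
  refine ⟨w, hsub _ p.end_mem_support, ?_⟩
  -- every neighbour of w in S is in p.support
  have hnb : ∀ b, b ∈ S → H.Adj w b → b ∈ p.support := by
    intro b hbS hadj
    by_contra hbn
    have hpath : (p.concat hadj).IsPath := by
      rw [← Walk.isPath_reverse_iff, Walk.reverse_concat, Walk.cons_isPath_iff]
      refine ⟨by rwa [Walk.isPath_reverse_iff], by simpa using hbn⟩
    have hQk1 : Q (k + 1) := by
      refine ⟨u, b, p.concat hadj, hpath, ?_, by simp [Walk.length_concat, hlen]⟩
      intro x hx
      rw [Walk.support_concat, List.mem_append] at hx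
      rcases hx with hx | hx
      · exact hsub _ hx
      · simp at hx; subst hx; exact hbS
    have h1 : k < k + 1 := Nat.lt_succ_self k
    have h2 : k + 1 ≤ Fintype.card α := le_of_lt (hbd (k+1) hQk1)
    exact Nat.findGreatest_is_greatest h1 h2 hQk1
  rw [Finset.card_le_one]
  intro b1 hb1 b2 hb2
  simp only [Finset.mem_filter, Finset.mem_erase] at hb1 hb2
  obtain ⟨⟨hb1w, hb1S⟩, hb1adj⟩ := hb1
  obtain ⟨⟨hb2w, hb2S⟩, hb2adj⟩ := hb2
  by_contra hne
  -- p has positive length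
  have hplen : 0 < p.length := by
    rcases Nat.eq_zero_or_pos p.length with h0 | h
    · exfalso
      have hsup : p.support = [w] := by
        cases p with
        | nil => simp
        | cons h q => simp [Walk.length_cons] at h0
      have hmem := hnb b1 hb1S hb1adj
      rw [hsup] at hmem
      simp at hmem
      exact hb1w hmem
    · exact h
  -- decompose p as q.concat
  obtain ⟨z, q, hzw, hpq⟩ : ∃ (z : α) (q : H.Walk u z) (h' : H.Adj z w), p = q.concat h' := by
    cases p with
    | nil => simp at hplen
    | cons h r => exact Walk.exists_cons_eq_concat h r
  -- cycle construction for a neighbour b ≠ z in support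
  have key : ∀ b, b ∈ S → H.Adj w b → b ≠ w → b ≠ z → False := by
    intro b hbS hadj hbw hbz
    have hbsup : b ∈ p.support := hnb b hbS hadj
    have hr : (p.dropUntil b hbsup).IsPath := hp.dropUntil hbsup
    have hcyc : (Walk.cons hadj (p.dropUntil b hbsup)).IsCycle := by
      rw [Walk.cons_isCycle_iff]
      refine ⟨hr, fun hmem => ?_⟩
      have hmem' : s(w, b) ∈ p.edges := (Walk.edges_dropUntil_subset p hbsup) hmem
      rw [hpq, Walk.edges_concat, List.concat_eq_append, List.mem_append] at hmem'
      rcases hmem' with hmem' | hmem'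
      · have : w ∈ q.support := Walk.fst_mem_support_of_mem_edges q hmem'
        have hwq : w ∉ q.support := by
          have := hp.support_nodup
          rw [hpq, Walk.support_concat] at this
          exact fun hw => (List.disjoint_of_nodup_append this) hw (by simp)
        exact hwq this
      · have h' : s(w, b) = s(z, w) := by simpa using hmem'
        rw [Sym2.eq_iff] at h'
        rcases h' with ⟨ha1, ha2⟩ | ⟨ha1, ha2⟩
        · exact hbw ha2
        · exact hbz ha2
    exact hac _ hcyc
  rcases eq_or_ne b1 z with h1 | h1
  · rcases eq_or_ne b2 z with h2 | h2
    · exact hne (h1.trans h2.symm)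
    · exact key b2 hb2S hb2adj hb2w h2
  · exact key b1 hb1S hb1adj hb1w h1


/-- `GoodOrder H D L`: each element of `L` has at most one `H`-neighbour among
`D` together with the earlier elements of `L`. -/
inductive GoodOrder (H : SimpleGraph α) [DecidableRel H.Adj] : Finset α → List α → Prop
  | nil (D : Finset α) : GoodOrder H D []
  | cons (D : Finset α) (a : α) (L : List α)
      (h : (D.filter (fun b => H.Adj a b)).card ≤ 1)
      (ht : GoodOrder H (insert a D) L) : GoodOrder H D (a :: L)

omit [Fintype α] in
lemma GoodOrder.append_singleton {D : Finset α} {L : List α} (hL : GoodOrder H D L) (a : α)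
    (h : ((D ∪ L.toFinset).filter (fun b => H.Adj a b)).card ≤ 1) :
    GoodOrder H D (L ++ [a]) := by
  induction hL with
  | nil D =>
    refine GoodOrder.cons D a [] ?_ (GoodOrder.nil _)
    simpa using h
  | cons D b L hb ht ih =>
    refine GoodOrder.cons D b (L ++ [a]) hb (ih ?_)
    have : insert b D ∪ L.toFinset = D ∪ (b :: L).toFinset := by
      ext x; simp [or_comm, or_assoc, or_left_comm]
    rw [this]
    exact h

lemma exists_goodOrder (hac : H.IsAcyclic) (S : Finset α) :
    ∃ L : List α, L.Nodup ∧ L.toFinset = S ∧ GoodOrder H ∅ L := by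
  classical
  induction S using Finset.strongInduction with
  | _ S ih =>
    rcases S.eq_empty_or_nonempty with rfl | hS
    · exact ⟨[], by simp, by simp, GoodOrder.nil _⟩
    · obtain ⟨a, haS, hdeg⟩ := exists_degle_one hac S hS
      obtain ⟨L, hnd, hfin, hgo⟩ := ih (S.erase a) (Finset.erase_ssubset haS)
      refine ⟨L ++ [a], ?_, ?_, ?_⟩
      · rw [List.nodup_append]
        refine ⟨hnd, List.nodup_singleton a, ?_⟩
        intro x hx
        have : x ∈ S.erase a := hfin ▸ List.mem_toFinset.mpr hx
        simp only [List.mem_singleton]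
        intro b hb h; subst h; simp_all
      · rw [List.toFinset_append, hfin]
        ext x
        simp only [Finset.mem_union, Finset.mem_erase, List.toFinset_cons, List.toFinset_nil,
          insert_empty_eq, Finset.mem_singleton]
        constructor
        · rintro (⟨-, hx⟩ | rfl) <;> [exact hx; exact haS]
        · intro hx
          by_cases hxa : x = a
          · exact Or.inr hxa
          · exact Or.inl ⟨hxa, hx⟩
      · refine hgo.append_singleton a ?_
        rw [Finset.empty_union, hfin]
        exact hdeg

lemma greedy_embed {n m : ℕ} {V : Type} [Fintype V] [DecidableEq V] (G : SimpleGraph V)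
    [DecidableRel G.Adj] (hcard : Fintype.card V = n) (hdeg : ∀ v : V, n - m ≤ G.degree v)
    (T : SimpleGraph (Fin n)) [DecidableRel T.Adj] :
    ∀ (L : List (Fin n)) (D : Finset (Fin n)) (g : Fin n → V),
      L.Nodup → (∀ a ∈ L, a ∉ D) → GoodOrder T D L →
      D.card + L.length + m < n →
      Set.InjOn g ↑D → (∀ a ∈ D, ∀ b ∈ D, T.Adj a b → G.Adj (g a) (g b)) →
      ∃ g' : Fin n → V, (∀ x ∈ D, g' x = g x) ∧ Set.InjOn g' ↑(D ∪ L.toFinset) ∧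
        (∀ a ∈ D ∪ L.toFinset, ∀ b ∈ D ∪ L.toFinset, T.Adj a b → G.Adj (g' a) (g' b)) := by
  intro L
  induction L with
  | nil =>
    intro D g _ _ _ _ hinj hedge
    exact ⟨g, fun _ _ => rfl, by simpa using hinj, by simpa using hedge⟩
  | cons a L' ih =>
    intro D g hnd hnotin hgo hcount hinj hedge
    have hfilt : (D.filter (fun b => T.Adj a b)).card ≤ 1 := by
      cases hgo with | cons _ _ _ h ht => exact h
    have hrest : GoodOrder T (insert a D) L' := by
      cases hgo with | cons _ _ _ h ht => exact ht
    set Nb := D.filter (fun b => T.Adj a b) with hNbdef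
    have himg : (D.image g).card ≤ D.card := Finset.card_image_le
    have hcount' : D.card + L'.length + 1 + m < n := by
      simpa [List.length_cons, Nat.add_assoc, Nat.add_comm, Nat.add_left_comm] using hcount
    have hychoice : ∃ y : V, y ∉ D.image g ∧ ∀ b ∈ Nb, G.Adj (g b) y := by
      rcases Nb.eq_empty_or_nonempty with hNb | ⟨b, hb⟩
      · have hne : (Finset.univ \ D.image g).Nonempty := by
          rw [← Finset.card_pos, Finset.card_sdiff_of_subset (Finset.subset_univ _), Finset.card_univ, hcard]
          omega
        obtain ⟨y, hy⟩ := hne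
        rw [Finset.mem_sdiff] at hy
        exact ⟨y, hy.2, by simp [hNb]⟩
      · have hNbb : Nb = {b} := by
          refine Finset.eq_singleton_iff_unique_mem.mpr ⟨hb, fun c hc => ?_⟩
          exact Finset.card_le_one.mp hfilt c hc b hb
        have hne : (G.neighborFinset (g b) \ D.image g).Nonempty := by
          rw [← Finset.card_pos]
          have h1 : (n - m) ≤ (G.neighborFinset (g b)).card := by
            rw [SimpleGraph.card_neighborFinset_eq_degree]; exact hdeg _
          have h2 := Finset.le_card_sdiff (D.image g) (G.neighborFinset (g b))
          omega
        obtain ⟨y, hy⟩ := hne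
        rw [Finset.mem_sdiff, SimpleGraph.mem_neighborFinset] at hy
        refine ⟨y, hy.2, fun c hc => ?_⟩
        rw [hNbb, Finset.mem_singleton] at hc
        subst hc; exact hy.1
    obtain ⟨y, hyimg, hyadj⟩ := hychoice
    have haD : a ∉ D := hnotin a (by simp)
    have haL' : a ∉ L' := (List.nodup_cons.mp hnd).1
    set g1 := Function.update g a y with hg1def
    have hg1D : ∀ x ∈ D, g1 x = g x := fun x hx =>
      Function.update_of_ne (by rintro rfl; exact haD hx) _ _
    have hg1a : g1 a = y := Function.update_self _ _ _
    have himg1 : (insert a D).card ≤ D.card + 1 := Finset.card_insert_le _ _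
    have hinj1 : Set.InjOn g1 ↑(insert a D) := by
      intro x hx x' hx' heq
      simp only [Finset.coe_insert, Set.mem_insert_iff, Finset.mem_coe] at hx hx'
      rcases hx with rfl | hx <;> rcases hx' with rfl | hx'
      · rfl
      · exfalso; rw [hg1a, hg1D _ hx'] at heq
        exact hyimg (by rw [heq]; exact Finset.mem_image_of_mem g hx')
      · exfalso; rw [hg1a, hg1D _ hx] at heq
        exact hyimg (by rw [← heq]; exact Finset.mem_image_of_mem g hx)
      · rw [hg1D _ hx, hg1D _ hx'] at heq
        exact hinj hx hx' heq
    have hedge1 : ∀ c ∈ insert a D, ∀ d ∈ insert a D, T.Adj c d → G.Adj (g1 c) (g1 d) := by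
      intro c hc d hd hcd
      rw [Finset.mem_insert] at hc hd
      rcases hc with rfl | hc <;> rcases hd with rfl | hd
      · exact absurd hcd (T.irrefl)
      · rw [hg1a, hg1D _ hd]
        exact (hyadj d (Finset.mem_filter.mpr ⟨hd, hcd⟩)).symm
      · rw [hg1a, hg1D _ hc]
        exact hyadj c (Finset.mem_filter.mpr ⟨hc, hcd.symm⟩)
      · rw [hg1D _ hc, hg1D _ hd]
        exact hedge c hc d hd hcd
    obtain ⟨g', hg'eq, hg'inj, hg'edge⟩ := ih (insert a D) g1 (List.nodup_cons.mp hnd).2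
      (fun b hb => by
        rw [Finset.mem_insert]
        push_neg
        exact ⟨fun h => haL' (h ▸ hb), hnotin b (List.mem_cons_of_mem a hb)⟩)
      hrest (by omega) hinj1 hedge1
    have hfinsets : insert a D ∪ L'.toFinset = D ∪ (a :: L').toFinset := by
      ext x
      simp only [Finset.mem_union, Finset.mem_insert, List.toFinset_cons]
      tauto
    refine ⟨g', fun x hx => ?_, by rw [← hfinsets]; exact hg'inj, by rw [← hfinsets]; exact hg'edge⟩
    rw [hg'eq x (Finset.mem_insert_of_mem hx), hg1D x hx]

end aux

theorem stmt_18 (n m : ℕ) (hm : 100 * m ≤ n)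
    (V : Type) [Fintype V] [DecidableEq V] (G : SimpleGraph V) [DecidableRel G.Adj]
    (hcard : Fintype.card V = n) (hdeg : ∀ v : V, n - m ≤ G.degree v)
    (T : SimpleGraph (Fin n)) [DecidableRel T.Adj] (hT : T.IsTree)
    (P : List (Σ u : Fin n, Σ v : Fin n, T.Walk u v))
    (hP : 10 * m ≤ P.length)
    (hpaths : ∀ p ∈ P, p.2.2.IsPath ∧ p.2.2.length = 4 ∧
      ∀ w ∈ p.2.2.support, w ≠ p.1 → w ≠ p.2.1 → T.degree w = 2)
    (hdisj : P.Pairwise (fun p q => ∀ w, w ∈ p.2.2.support → w ∉ q.2.2.support)) :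
    ∃ f : T →g G, Function.Injective f := by
  classical
  -- basic positivity facts
  have hn0 : 0 < n := by
    have hne : Nonempty (Fin n) := hT.isConnected.nonempty
    simpa [Fin.pos_iff_nonempty] using hne
  haveI hVne : Nonempty V := Fintype.card_pos_iff.mp (by rw [hcard]; exact hn0)
  have hm1 : 1 ≤ m := by
    by_contra h
    have hm0 : m = 0 := by omega
    subst hm0
    obtain ⟨v⟩ := hVne
    have h1 := hdeg v
    have h2 : G.degree v < n := by rw [← hcard]; exact G.degree_lt_card_verts v
    omega
  -- canonical vertices of each bare path
  set mid : (Σ u : Fin n, Σ v : Fin n, T.Walk u v) → Fin n := fun p => p.2.2.getVert 2 with hmiddef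
  set nb1 : (Σ u : Fin n, Σ v : Fin n, T.Walk u v) → Fin n := fun p => p.2.2.getVert 1 with hnb1def
  set nb3 : (Σ u : Fin n, Σ v : Fin n, T.Walk u v) → Fin n := fun p => p.2.2.getVert 3 with hnb3def
  have hsup : ∀ p ∈ P, p.2.2.support = [p.1, nb1 p, mid p, nb3 p, p.2.1] := by
    intro p hp
    have h4 := (hpaths p hp).2.1
    have h40 : p.2.2.getVert 4 = p.2.1 := by
      conv_lhs => rw [← h4]
      exact p.2.2.getVert_length
    rw [walk_len4_support p.2.2 h4, p.2.2.getVert_zero, h40]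
  have hmidsup : ∀ p, mid p ∈ p.2.2.support := fun p => getVert_mem_support' p.2.2 2
  have hnb1sup : ∀ p, nb1 p ∈ p.2.2.support := fun p => getVert_mem_support' p.2.2 1
  have hnb3sup : ∀ p, nb3 p ∈ p.2.2.support := fun p => getVert_mem_support' p.2.2 3
  have hnodup : ∀ p ∈ P, ([p.1, nb1 p, mid p, nb3 p, p.2.1] : List (Fin n)).Nodup :=
    fun p hp => (hsup p hp) ▸ (hpaths p hp).1.support_nodup
  have hadj12 : ∀ p ∈ P, T.Adj (nb1 p) (mid p) := fun p hp =>
    p.2.2.adj_getVert_succ (by rw [(hpaths p hp).2.1]; omega)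
  have hadj23 : ∀ p ∈ P, T.Adj (mid p) (nb3 p) := fun p hp =>
    p.2.2.adj_getVert_succ (by rw [(hpaths p hp).2.1]; omega)
  -- symmetric disjointness
  have hdisj' : ∀ p ∈ P, ∀ q ∈ P, p ≠ q → ∀ w, w ∈ p.2.2.support → w ∉ q.2.2.support := by
    have hsymm : Symmetric (fun p q : (Σ u : Fin n, Σ v : Fin n, T.Walk u v) =>
        ∀ w, w ∈ p.2.2.support → w ∉ q.2.2.support) := by
      intro p q h w hwq hwp
      exact h w hwp hwq
    intro p hp q hq hne
    haveI : Std.Symm (fun p q : (Σ u : Fin n, Σ v : Fin n, T.Walk u v) =>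
        ∀ w, w ∈ p.2.2.support → w ∉ q.2.2.support) := ⟨hsymm⟩
    exact hdisj.forall hp hq hne
  -- the set of middle vertices
  set Pm : List (Fin n) := P.map mid with hPmdef
  have hPmnodup : Pm.Nodup := by
    rw [hPmdef, List.Nodup, List.pairwise_map]
    refine hdisj.imp ?_
    intro p q h hmeq
    exact h (mid p) (hmidsup p) (hmeq ▸ hmidsup q)
  set M : Finset (Fin n) := Pm.toFinset with hMdef
  have hMcard : M.card = P.length := by
    rw [hMdef, List.toFinset_card_of_nodup hPmnodup, hPmdef, List.length_map]
  have hmemM : ∀ x, x ∈ M ↔ ∃ p ∈ P, mid p = x := by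
    intro x
    simp [hMdef, hPmdef, List.mem_toFinset, List.mem_map]
  have hMn : M.card ≤ n := by
    have := Finset.card_le_univ M
    rwa [Fintype.card_fin] at this
  have hM10 : 10 * m ≤ M.card := hMcard ▸ hP
  -- the greedy phase
  set S : Finset (Fin n) := Finset.univ \ M with hSdef
  have hScard : S.card = n - M.card := by
    rw [hSdef, Finset.card_sdiff_of_subset (Finset.subset_univ _), Finset.card_univ, Fintype.card_fin]
  obtain ⟨L, hLnd, hLfin, hLgo⟩ := exists_goodOrder hT.2 S
  have hLlen : L.length = S.card := by rw [← List.toFinset_card_of_nodup hLnd, hLfin]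
  have hcount : (∅ : Finset (Fin n)).card + L.length + m < n := by
    rw [Finset.card_empty, hLlen, hScard]
    omega
  obtain ⟨g, -, hginj, hgedge⟩ := greedy_embed G hcard hdeg T L ∅ (fun _ => Classical.arbitrary V)
    hLnd (by simp) hLgo hcount (by simp) (by simp)
  rw [Finset.empty_union, hLfin] at hginj hgedge
  -- the set of unused vertices
  set U : Finset V := Finset.univ \ S.image g with hUdef
  have hUcard : U.card = M.card := by
    rw [hUdef, Finset.card_sdiff_of_subset (Finset.subset_univ _), Finset.card_univ, hcard,
      Finset.card_image_of_injOn hginj, hScard]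
    omega
  -- non-middle vertices of the paths lie in S
  have hnotmid : ∀ p ∈ P, ∀ x, x ∈ p.2.2.support → x ≠ mid p → x ∈ S := by
    intro p hp x hxs hxne
    rw [hSdef, Finset.mem_sdiff]
    refine ⟨Finset.mem_univ _, ?_⟩
    rw [hmemM]
    rintro ⟨q, hq, rfl⟩
    rcases eq_or_ne p q with rfl | hne
    · exact hxne rfl
    · exact hdisj' p hp q hq hne _ hxs (hmidsup q)
  have hdistinct : ∀ p ∈ P, nb1 p ≠ mid p ∧ mid p ≠ nb3 p ∧ nb1 p ≠ nb3 p ∧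
      mid p ≠ p.1 ∧ mid p ≠ p.2.1 := by
    intro p hp
    have h := hnodup p hp
    simp only [List.nodup_cons, List.mem_cons, List.mem_singleton, List.not_mem_nil,
      or_false, not_or, List.nodup_nil, and_true] at h
    exact ⟨h.2.1.1, h.2.2.1.1, h.2.1.2.1, fun hh => h.1.2.1 hh.symm, h.2.2.1.2⟩
  have hnb1S : ∀ p ∈ P, nb1 p ∈ S := fun p hp =>
    hnotmid p hp _ (by rw [hsup p hp]; simp) (hdistinct p hp).1
  have hnb3S : ∀ p ∈ P, nb3 p ∈ S := fun p hp =>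
    hnotmid p hp _ (by rw [hsup p hp]; simp) (fun h => (hdistinct p hp).2.1 h.symm)
  -- Hall's theorem setup
  set t : {p // p ∈ P} → Finset V := fun x =>
    (U ∩ G.neighborFinset (g (nb1 x.1))) ∩ G.neighborFinset (g (nb3 x.1)) with htdef
  have htU : ∀ x, t x ⊆ U := by
    intro x y hy
    exact (Finset.mem_inter.mp (Finset.mem_inter.mp hy).1).1
  have hcompl : ∀ w : V, (Finset.univ \ G.neighborFinset w).card ≤ m := by
    intro w
    rw [Finset.card_sdiff_of_subset (Finset.subset_univ _), Finset.card_univ, hcard,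
      SimpleGraph.card_neighborFinset_eq_degree]
    have := hdeg w
    have := G.degree_lt_card_verts w
    omega
  have htcard : ∀ x, M.card ≤ (t x).card + 2 * m := by
    intro x
    have heq : t x = ((U \ (Finset.univ \ G.neighborFinset (g (nb1 x.1)))) \ (Finset.univ \ G.neighborFinset (g (nb3 x.1)))) := by
      ext y
      simp only [htdef, Finset.mem_inter, Finset.mem_sdiff, Finset.mem_univ, true_and]
      tauto
    have c1 := Finset.le_card_sdiff (Finset.univ \ G.neighborFinset (g (nb3 x.1)))
      (U \ (Finset.univ \ G.neighborFinset (g (nb1 x.1))))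
    have c2 := Finset.le_card_sdiff (Finset.univ \ G.neighborFinset (g (nb1 x.1))) U
    have d1 := hcompl (g (nb1 x.1))
    have d2 := hcompl (g (nb3 x.1))
    rw [heq]
    omega
  -- injectivity of mid on subtype
  have hmidinj : ∀ x y : {p // p ∈ P}, mid x.1 = mid y.1 → x = y := by
    intro x y hxy
    rcases eq_or_ne x y with h | h
    · exact h
    · exfalso
      have hne : x.1 ≠ y.1 := fun hh => h (Subtype.ext hh)
      exact hdisj' x.1 x.2 y.1 y.2 hne _ (hmidsup x.1) (hxy ▸ hmidsup y.1)
  -- Hall's condition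
  have hhall : ∀ s : Finset {p // p ∈ P}, s.card ≤ (s.biUnion t).card := by
    intro s
    rcases s.eq_empty_or_nonempty with rfl | ⟨x0, hx0⟩
    · simp
    by_cases hcase : s.card ≤ M.card - 2 * m
    · calc s.card ≤ (t x0).card := by have := htcard x0; omega
        _ ≤ (s.biUnion t).card :=
          Finset.card_le_card (fun y hy => Finset.mem_biUnion.mpr ⟨x0, hx0, hy⟩)
    · push_neg at hcase
      have hUsub : U ⊆ s.biUnion t := by
        intro u hu
        by_contra hub
        have hbad : ∀ x ∈ s, ¬ G.Adj (g (nb1 x.1)) u ∨ ¬ G.Adj (g (nb3 x.1)) u := by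
          intro x hx
          by_contra hcon
          push_neg at hcon
          refine hub (Finset.mem_biUnion.mpr ⟨x, hx, ?_⟩)
          rw [htdef]
          simp only [Finset.mem_inter, SimpleGraph.mem_neighborFinset]
          exact ⟨⟨hu, hcon.1⟩, hcon.2⟩
        set φ' : {p // p ∈ P} → Fin n := fun x =>
          if G.Adj (g (nb1 x.1)) u then nb3 x.1 else nb1 x.1 with hφ'def
        have hφ'S : ∀ x : {p // p ∈ P}, φ' x ∈ S := by
          intro x
          rw [hφ'def]
          dsimp only
          split
          · exact hnb3S x.1 x.2
          · exact hnb1S x.1 x.2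
        have hφ'sup : ∀ x : {p // p ∈ P}, φ' x ∈ x.1.2.2.support := by
          intro x
          rw [hφ'def]
          dsimp only
          split
          · exact hnb3sup x.1
          · exact hnb1sup x.1
        have hφmem : ∀ x ∈ s, g (φ' x) ∈ Finset.univ \ G.neighborFinset u := by
          intro x hx
          rw [Finset.mem_sdiff, SimpleGraph.mem_neighborFinset]
          refine ⟨Finset.mem_univ _, ?_⟩
          rw [hφ'def]
          dsimp only
          by_cases hif : G.Adj (g (nb1 x.1)) u
          · rw [if_pos hif]
            rcases hbad x hx with h | h
            · exact absurd hif h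
            · exact fun hh => h hh.symm
          · rw [if_neg hif]
            exact fun hh => hif hh.symm
        have hφinj : Set.InjOn (fun x => g (φ' x)) ↑s := by
          intro x hx y hy heq
          have h1 : φ' x = φ' y := hginj (hφ'S x) (hφ'S y) heq
          rcases eq_or_ne x y with h | h
          · exact h
          · exfalso
            have hne : x.1 ≠ y.1 := fun hh => h (Subtype.ext hh)
            exact hdisj' x.1 x.2 y.1 y.2 hne _ (hφ'sup x) (h1 ▸ hφ'sup y)
        have hsm : s.card ≤ m := by
          calc s.card ≤ (Finset.univ \ G.neighborFinset u).card :=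
                Finset.card_le_card_of_injOn _ hφmem hφinj
            _ ≤ m := hcompl u
        omega
      have hsM : s.card ≤ M.card := by
        refine Finset.card_le_card_of_injOn (fun x => mid x.1) ?_ ?_
        · intro x _
          exact (hmemM _).mpr ⟨x.1, x.2, rfl⟩
        · intro x _ y _ hxy
          exact hmidinj x y hxy
      calc s.card ≤ M.card := hsM
        _ = U.card := hUcard.symm
        _ ≤ (s.biUnion t).card := Finset.card_le_card hUsub
  obtain ⟨e, heinj, hemem⟩ := (Finset.all_card_le_biUnion_card_iff_exists_injective t).mp hhall
  -- the final embedding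
  set F : Fin n → V := fun a => if h : ∃ x : {p // p ∈ P}, mid x.1 = a then e h.choose else g a
    with hFdef
  have haM : ∀ a : Fin n, (a ∈ M) ↔ ∃ x : {p // p ∈ P}, mid x.1 = a := by
    intro a
    rw [hmemM]
    constructor
    · rintro ⟨p, hp, hpa⟩
      exact ⟨⟨p, hp⟩, hpa⟩
    · rintro ⟨x, hx⟩
      exact ⟨x.1, x.2, hx⟩
  have hFpos : ∀ a (h : ∃ x : {p // p ∈ P}, mid x.1 = a), F a = e h.choose := by
    intro a h
    rw [hFdef]
    exact dif_pos h
  have hFneg : ∀ a, (¬ ∃ x : {p // p ∈ P}, mid x.1 = a) → F a = g a := by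
    intro a h
    rw [hFdef]
    exact dif_neg h
  have hgS_notU : ∀ a, a ∈ S → g a ∉ U := by
    intro a ha hu
    rw [hUdef, Finset.mem_sdiff] at hu
    exact hu.2 (Finset.mem_image_of_mem g ha)
  have hSnm : ∀ a : Fin n, (¬ ∃ x : {p // p ∈ P}, mid x.1 = a) → a ∈ S := by
    intro a h
    rw [hSdef, Finset.mem_sdiff]
    exact ⟨Finset.mem_univ _, fun hM' => h ((haM a).mp hM')⟩
  -- injectivity
  have hFinj : Function.Injective F := by
    intro a b hab
    by_cases ha : ∃ x : {p // p ∈ P}, mid x.1 = a <;>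
      by_cases hb : ∃ x : {p // p ∈ P}, mid x.1 = b
    · rw [hFpos a ha, hFpos b hb] at hab
      rw [← ha.choose_spec, ← hb.choose_spec, heinj hab]
    · exfalso
      rw [hFpos a ha, hFneg b hb] at hab
      have h1 : e ha.choose ∈ U := htU _ (hemem ha.choose)
      rw [hab] at h1
      exact hgS_notU b (hSnm b hb) h1
    · exfalso
      rw [hFneg a ha, hFpos b hb] at hab
      have h1 : e hb.choose ∈ U := htU _ (hemem hb.choose)
      rw [← hab] at h1
      exact hgS_notU a (hSnm a ha) h1
    · rw [hFneg a ha, hFneg b hb] at hab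
      exact hginj (hSnm a ha) (hSnm b hb) hab
  -- homomorphism property
  have hhelper : ∀ a b, T.Adj a b → (∃ x : {p // p ∈ P}, mid x.1 = a) → G.Adj (F a) (F b) := by
    intro a b hab ha
    have hx := ha.choose_spec
    set x := ha.choose with hxdef
    have hp := x.2
    -- degree of a is 2
    have hdeg2 : T.degree a = 2 := by
      refine (hpaths x.1 hp).2.2 a ?_ ?_ ?_
      · rw [← hx]; exact getVert_mem_support' _ 2
      · rw [← hx]; exact (hdistinct x.1 hp).2.2.2.1
      · rw [← hx]; exact (hdistinct x.1 hp).2.2.2.2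
    have hnbs : T.neighborFinset a = {nb1 x.1, nb3 x.1} := by
      have hsub : ({nb1 x.1, nb3 x.1} : Finset (Fin n)) ⊆ T.neighborFinset a := by
        intro z hz
        rw [Finset.mem_insert, Finset.mem_singleton] at hz
        rw [SimpleGraph.mem_neighborFinset]
        rcases hz with rfl | rfl
        · rw [← hx]; exact (hadj12 x.1 hp).symm
        · rw [← hx]; exact hadj23 x.1 hp
      have hcard2 : ({nb1 x.1, nb3 x.1} : Finset (Fin n)).card = 2 := by
        rw [Finset.card_insert_of_notMem (by simp [(hdistinct x.1 hp).2.2.1]),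
          Finset.card_singleton]
      exact (Finset.eq_of_subset_of_card_le hsub
        (by rw [SimpleGraph.card_neighborFinset_eq_degree, hdeg2, hcard2])).symm
    have hbmem : b = nb1 x.1 ∨ b = nb3 x.1 := by
      have hb : b ∈ T.neighborFinset a := by
        rw [SimpleGraph.mem_neighborFinset]; exact hab
      rw [hnbs, Finset.mem_insert, Finset.mem_singleton] at hb
      exact hb
    have hFa : F a = e x := hFpos a ha
    have hta := hemem x
    rw [htdef] at hta
    simp only [Finset.mem_inter, SimpleGraph.mem_neighborFinset] at hta
    rcases hbmem with rfl | rfl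
    · have hFb : F (nb1 x.1) = g (nb1 x.1) := by
        refine hFneg _ ?_
        rintro ⟨y, hy⟩
        have : nb1 x.1 ∈ M := (haM _).mpr ⟨y, hy⟩
        have hS1 := hnb1S x.1 hp
        rw [hSdef, Finset.mem_sdiff] at hS1
        exact hS1.2 this
      rw [hFa, hFb]
      exact hta.1.2.symm
    · have hFb : F (nb3 x.1) = g (nb3 x.1) := by
        refine hFneg _ ?_
        rintro ⟨y, hy⟩
        have : nb3 x.1 ∈ M := (haM _).mpr ⟨y, hy⟩
        have hS3 := hnb3S x.1 hp
        rw [hSdef, Finset.mem_sdiff] at hS3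
        exact hS3.2 this
      rw [hFa, hFb]
      exact hta.2.symm
  refine ⟨⟨F, ?_⟩, hFinj⟩
  intro a b hab
  by_cases ha : ∃ x : {p // p ∈ P}, mid x.1 = a
  · exact hhelper a b hab ha
  · by_cases hb : ∃ x : {p // p ∈ P}, mid x.1 = b
    · exact (hhelper b a hab.symm hb).symm
    · rw [hFneg a ha, hFneg b hb]
      exact hgedge a (hSnm a ha) b (hSnm b hb) hab
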